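/- Let C ⊆ R^n be nonempty, closed, convex, and line-free, and for each ν let P^ν be an (ε^ν, δ^ν)-approximation of C with (ε^ν, δ^ν) → (0,0). Then P^ν converges to C in the sense of Painlevé–Kuratowski. -/

import Mathlib

open Metric Set Filter
open scoped ENNReal Pointwise Topology RealInnerProductSpace

noncomputable section

/-- The recession cone of a set `C`. -/
def recc {n : ℕ} (C : Set (EuclideanSpace ℝ (Fin n))) : Set (EuclideanSpace ℝ (Fin n)) :=
  {d | ∀ x ∈ C, ∀ t : ℝ, 0 ≤ t → x + t • d ∈ C}

/-- The excess of `C₁` over `C₂`: `sup_{c₁ ∈ C₁} inf_{c₂ ∈ C₂} ‖c₁ - c₂‖`, valued in `ℝ≥0∞`. -/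
def exc {n : ℕ} (C₁ C₂ : Set (EuclideanSpace ℝ (Fin n))) : ℝ≥0∞ :=
  ⨆ x ∈ C₁, EMetric.infEdist x C₂

/-- The conical hull of a set: all nonnegative multiples of its elements, together with `0`. -/
def coneHull {n : ℕ} (D : Set (EuclideanSpace ℝ (Fin n))) : Set (EuclideanSpace ℝ (Fin n)) :=
  {x | ∃ t : ℝ, 0 ≤ t ∧ ∃ d ∈ convexHull ℝ D, x = t • d}

/-- A polyhedron: `conv V + cone D` for finite sets `V`, `D`. -/
def IsPolyhedron {n : ℕ} (P : Set (EuclideanSpace ℝ (Fin n))) : Prop :=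
  ∃ V D : Set (EuclideanSpace ℝ (Fin n)), V.Finite ∧ D.Finite ∧
    P = convexHull ℝ V + coneHull D

/-- `P` is an `(ε, δ)`-approximation of `C`: `P` is a line-free polyhedron with
(i) `exc(vert P, C) ≤ ε`, (ii) truncated Hausdorff distance between the recession cones
at most `δ`, (iii) `P ⊇ C`. -/
def IsEDApprox {n : ℕ} (P C : Set (EuclideanSpace ℝ (Fin n))) (ε δ : ℝ) : Prop :=
  IsPolyhedron P ∧ (∀ d ∈ recc P, -d ∈ recc P → d = 0) ∧
  exc (Set.extremePoints ℝ P) C ≤ ENNReal.ofReal ε ∧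
  Metric.hausdorffDist (recc P ∩ Metric.closedBall 0 1)
    (recc C ∩ Metric.closedBall 0 1) ≤ δ ∧
  C ⊆ P
variable {n : ℕ}

lemma zero_mem_recc (C : Set (EuclideanSpace ℝ (Fin n))) : (0 : EuclideanSpace ℝ (Fin n)) ∈ recc C :=
  fun x hx t _ => by simpa using hx

lemma smul_mem_recc {C : Set (EuclideanSpace ℝ (Fin n))} {d : EuclideanSpace ℝ (Fin n)}
    (hd : d ∈ recc C) {s : ℝ} (hs : 0 ≤ s) : s • d ∈ recc C := by
  intro x hx t ht
  have := hd x hx (t * s) (mul_nonneg ht hs)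
  simpa [mul_smul] using this

lemma isClosed_recc {C : Set (EuclideanSpace ℝ (Fin n))} (hC : IsClosed C) :
    IsClosed (recc C) := by
  have : recc C = ⋂ (x : EuclideanSpace ℝ (Fin n)) (_ : x ∈ C) (t : ℝ) (_ : 0 ≤ t),
      (fun d : EuclideanSpace ℝ (Fin n) => x + t • d) ⁻¹' C := by
    ext d; simp [recc, Set.mem_iInter]
  rw [this]
  exact isClosed_iInter fun x => isClosed_iInter fun hx => isClosed_iInter fun t =>
    isClosed_iInter fun ht => hC.preimage (continuous_const.add (continuous_id.const_smul t))

lemma smul_mem_coneHull {D : Set (EuclideanSpace ℝ (Fin n))} {x : EuclideanSpace ℝ (Fin n)}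
    (hx : x ∈ coneHull D) {s : ℝ} (hs : 0 ≤ s) : s • x ∈ coneHull D := by
  obtain ⟨t, ht, d, hd, rfl⟩ := hx
  exact ⟨s * t, mul_nonneg hs ht, d, hd, (mul_smul s t d).symm⟩

lemma zero_mem_coneHull {D : Set (EuclideanSpace ℝ (Fin n))} (hD : (coneHull D).Nonempty) :
    (0 : EuclideanSpace ℝ (Fin n)) ∈ coneHull D := by
  obtain ⟨x, hx⟩ := hD
  simpa using smul_mem_coneHull hx (le_refl (0:ℝ))

lemma add_mem_coneHull {D : Set (EuclideanSpace ℝ (Fin n))} {x y : EuclideanSpace ℝ (Fin n)}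
    (hx : x ∈ coneHull D) (hy : y ∈ coneHull D) : x + y ∈ coneHull D := by
  obtain ⟨t, ht, d, hd, rfl⟩ := hx
  obtain ⟨s, hs, e, he, rfl⟩ := hy
  rcases eq_or_lt_of_le (add_nonneg ht hs) with h0 | hpos
  · have ht0 : t = 0 := by linarith
    have hs0 : s = 0 := by linarith
    exact ⟨0, le_refl _, d, hd, by simp [ht0, hs0]⟩
  · refine ⟨t + s, le_of_lt hpos, (t / (t + s)) • d + (s / (t + s)) • e, ?_, ?_⟩
    · exact (convex_convexHull ℝ D) hd he (div_nonneg ht hpos.le) (div_nonneg hs hpos.le)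
        (by field_simp)
    · rw [smul_add, smul_smul, smul_smul]
      field_simp
lemma coneHull_subset_recc (V D : Set (EuclideanSpace ℝ (Fin n))) :
    coneHull D ⊆ recc (convexHull ℝ V + coneHull D) := by
  intro d hd x hx t ht
  obtain ⟨q, hq, w, hw, rfl⟩ := hx
  exact ⟨q, hq, w + t • d, add_mem_coneHull hw (smul_mem_coneHull hd ht), (add_assoc _ _ _).symm⟩

lemma mink_aux (D : Set (EuclideanSpace ℝ (Fin n))) (N : ℕ) :
    ∀ V : Finset (EuclideanSpace ℝ (Fin n)), V.card ≤ N →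
    (∀ d ∈ recc (convexHull ℝ ↑V + coneHull D),
      -d ∈ recc (convexHull ℝ ↑V + coneHull D) → d = 0) →
    convexHull ℝ ↑V + coneHull D ⊆
      convexHull ℝ (Set.extremePoints ℝ (convexHull ℝ (V : Set (EuclideanSpace ℝ (Fin n)))
        + coneHull D)) + coneHull D := by
  classical
  induction N with
  | zero =>
    intro V hcard _
    have : V = ∅ := Finset.card_eq_zero.mp (Nat.le_zero.mp hcard)
    subst this
    simp [Set.empty_add]
  | succ N IH =>
    intro V hcard hpt
    by_cases hcone : coneHull D = (∅ : Set (EuclideanSpace ℝ (Fin n)))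
    · rw [hcone, Set.add_empty]; exact Set.empty_subset _
    have hcne : (coneHull D).Nonempty := Set.nonempty_iff_ne_empty.mpr hcone
    by_cases hsub : (V : Set (EuclideanSpace ℝ (Fin n))) ⊆
        Set.extremePoints ℝ (convexHull ℝ ↑V + coneHull D)
    · exact Set.add_subset_add (convexHull_mono hsub) subset_rfl
    · obtain ⟨v, hvV, hvext⟩ := Set.not_subset.mp hsub
      have hvV' : v ∈ V := hvV
      have hvP : v ∈ convexHull ℝ ↑V + coneHull D :=
        ⟨v, subset_convexHull ℝ _ hvV, 0, zero_mem_coneHull hcne, add_zero v⟩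
      -- Claim: v ∈ conv (V.erase v) + coneHull D
      have hclaim : v ∈ convexHull ℝ (↑(V.erase v) : Set (EuclideanSpace ℝ (Fin n)))
          + coneHull D := by
        by_cases hvK : v ∈ Set.extremePoints ℝ (convexHull ℝ (V : Set (EuclideanSpace ℝ (Fin n))))
        · -- v is extreme in K but not in P
          rw [mem_extremePoints] at hvext
          push_neg at hvext
          obtain ⟨a, ha, b, hb, hseg, hne⟩ := hvext hvP
          obtain ⟨qa, hqa, wa, hwa, rfl⟩ := ha
          obtain ⟨qb, hqb, wb, hwb, rfl⟩ := hb
          obtain ⟨ta, tb, hta, htb, htab, hv⟩ := hseg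
          set m := ta • qa + tb • qb with hm
          have hmK : m ∈ convexHull ℝ (V : Set (EuclideanSpace ℝ (Fin n))) :=
            (convex_convexHull ℝ _) hqa hqb hta.le htb.le htab
          set w := ta • wa + tb • wb with hwdef
          have hwC : w ∈ coneHull D :=
            add_mem_coneHull (smul_mem_coneHull hwa hta.le) (smul_mem_coneHull hwb htb.le)
          have hvmw : v = m + w := by
            rw [← hv, hm, hwdef, smul_add, smul_add]
            abel
          -- w = 0 leads to contradiction via extremality of v in K
          have hcontra : w = 0 → False := by
            intro hw0
            have hdd : ta • wa ∈ recc (convexHull ℝ ↑V + coneHull D) :=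
              coneHull_subset_recc _ _ (smul_mem_coneHull hwa hta.le)
            have hnd : -(ta • wa) ∈ recc (convexHull ℝ ↑V + coneHull D) := by
              have h2 : -(ta • wa) = tb • wb := by
                rw [hwdef] at hw0
                rw [neg_eq_iff_add_eq_zero]
                exact hw0
              rw [h2]
              exact coneHull_subset_recc _ _ (smul_mem_coneHull hwb htb.le)
            have hwa0 : wa = 0 := by
              have h0 : ta • wa = 0 := hpt _ hdd hnd
              rcases smul_eq_zero.mp h0 with h | h
              · exact absurd h (ne_of_gt hta)
              · exact h
            have hwb0 : wb = 0 := by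
              have h0 : tb • wb = 0 := by
                rw [hwdef, hwa0] at hw0
                simpa using hw0
              rcases smul_eq_zero.mp h0 with h | h
              · exact absurd h (ne_of_gt htb)
              · exact h
            have haK : qa + wa ∈ convexHull ℝ (V : Set (EuclideanSpace ℝ (Fin n))) := by
              rw [hwa0, add_zero]; exact hqa
            have hbK : qb + wb ∈ convexHull ℝ (V : Set (EuclideanSpace ℝ (Fin n))) := by
              rw [hwb0, add_zero]; exact hqb
            have := (mem_extremePoints.mp hvK).2 _ haK _ hbK ⟨ta, tb, hta, htb, htab, hv⟩
            exact hne this.1 this.2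
          by_cases hVe : V.erase v = ∅
          · -- V = {v}, m = v, w = 0, contradiction
            have hV1 : V = {v} := by
              rcases (Finset.erase_eq_empty_iff V v).mp hVe with h | h
              · exact absurd (h ▸ hvV') (Finset.notMem_empty v)
              · exact h
            have hm0 : m = v := by
              rw [hV1] at hmK
              simpa [convexHull_singleton] using hmK
            have hw0 : w = 0 := by
              rw [hm0] at hvmw
              exact left_eq_add.mp hvmw
            exact (hcontra hw0).elim
          · -- V.erase v nonempty
            have hVne : ((V.erase v : Finset (EuclideanSpace ℝ (Fin n))) :
                Set (EuclideanSpace ℝ (Fin n))).Nonempty := by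
              obtain ⟨y, hy⟩ := Finset.nonempty_iff_ne_empty.mpr hVe
              exact ⟨y, hy⟩
            have hVins : (V : Set (EuclideanSpace ℝ (Fin n)))
                = insert v (↑(V.erase v)) := by
              rw [← Finset.coe_insert, Finset.insert_erase hvV']
            have hmK' : m ∈ convexJoin ℝ {v} (convexHull ℝ
                ((V.erase v : Finset (EuclideanSpace ℝ (Fin n))) :
                Set (EuclideanSpace ℝ (Fin n)))) := by
              rw [← convexHull_insert hVne, ← hVins]
              exact hmK
            obtain ⟨v', hv', z, hz, hmseg⟩ := mem_convexJoin.mp hmK'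
            rw [Set.mem_singleton_iff] at hv'
            rw [hv'] at hmseg
            obtain ⟨l1, l2, hl1, hl2, hl12, hm'⟩ := hmseg
            rcases eq_or_lt_of_le hl2 with hl20 | hl2pos
            · -- l2 = 0: m = v, w = 0, contradiction
              have hl11 : l1 = 1 := by linarith
              have hm0 : m = v := by
                rw [← hm', ← hl20, hl11]
                simp
              have hw0 : w = 0 := by
                rw [hm0] at hvmw
                exact left_eq_add.mp hvmw
              exact (hcontra hw0).elim
            · have hl2' : (l2 : ℝ) ≠ 0 := ne_of_gt hl2pos
              refine ⟨z, hz, l2⁻¹ • w, smul_mem_coneHull hwC (inv_nonneg.mpr hl2pos.le), ?_⟩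
              have key : l2 • v = l2 • z + w := by
                have h1 : v = l1 • v + l2 • z + w := by
                  rw [← hm'] at hvmw
                  exact hvmw
                have h2 : l2 = 1 - l1 := by linarith
                rw [h2] at h1 ⊢
                linear_combination (norm := module) h1
              have hfin : v = z + l2⁻¹ • w := by
                have := congrArg (fun y => l2⁻¹ • y) key
                simpa [smul_smul, inv_mul_cancel₀ hl2', smul_add] using this
              exact hfin.symm
        · -- v not extreme in K: Krein-Milman route
          have hKcomp : IsCompact (convexHull ℝ (V : Set (EuclideanSpace ℝ (Fin n)))) :=
            (V.finite_toSet.isCompact_convexHull (𝕜 := ℝ))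
          have hKM : closure (convexHull ℝ
              ((convexHull ℝ (V : Set (EuclideanSpace ℝ (Fin n)))).extremePoints ℝ))
              = convexHull ℝ (V : Set (EuclideanSpace ℝ (Fin n))) :=
            closure_convexHull_extremePoints hKcomp (convex_convexHull ℝ _)
          have hextfin : ((convexHull ℝ
              (V : Set (EuclideanSpace ℝ (Fin n)))).extremePoints ℝ).Finite :=
            V.finite_toSet.subset extremePoints_convexHull_subset
          have hclosed : IsClosed (convexHull ℝ ((convexHull ℝ
              (V : Set (EuclideanSpace ℝ (Fin n)))).extremePoints ℝ)) :=
            (hextfin.isCompact_convexHull (𝕜 := ℝ)).isClosed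
          have hKeq : convexHull ℝ ((convexHull ℝ
              (V : Set (EuclideanSpace ℝ (Fin n)))).extremePoints ℝ)
              = convexHull ℝ (V : Set (EuclideanSpace ℝ (Fin n))) := by
            rw [← hclosed.closure_eq, hKM]
          have hvK' : v ∈ convexHull ℝ ((convexHull ℝ
              (V : Set (EuclideanSpace ℝ (Fin n)))).extremePoints ℝ) := by
            rw [hKeq]; exact subset_convexHull ℝ _ hvV
          have hsub2 : (convexHull ℝ (V : Set (EuclideanSpace ℝ (Fin n)))).extremePoints ℝ ⊆
              (↑(V.erase v) : Set (EuclideanSpace ℝ (Fin n))) := by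
            intro y hy
            have hyV : y ∈ (V : Set (EuclideanSpace ℝ (Fin n))) := extremePoints_convexHull_subset hy
            have hyv : y ≠ v := fun h => hvK (h ▸ hy)
            simp only [Finset.coe_erase, Set.mem_diff, Set.mem_singleton_iff]
            exact ⟨hyV, hyv⟩
          exact ⟨v, convexHull_mono hsub2 hvK', 0, zero_mem_coneHull hcne, add_zero v⟩
      -- P = conv (V.erase v) + coneHull D
      have hPeq : convexHull ℝ (V : Set (EuclideanSpace ℝ (Fin n))) + coneHull D
          = convexHull ℝ (↑(V.erase v) : Set (EuclideanSpace ℝ (Fin n))) + coneHull D := by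
        apply Set.Subset.antisymm
        · obtain ⟨q', hq', w'', hw'', hveq⟩ := hclaim
          intro x hx
          obtain ⟨q, hq, w, hw, rfl⟩ := hx
          by_cases hVe : V.erase v = ∅
          · rw [hVe] at hq'
            simp at hq'
          · have hVne : ((V.erase v : Finset (EuclideanSpace ℝ (Fin n))) :
                Set (EuclideanSpace ℝ (Fin n))).Nonempty := by
              obtain ⟨y, hy⟩ := Finset.nonempty_iff_ne_empty.mpr hVe
              exact ⟨y, hy⟩
            have hVins : (V : Set (EuclideanSpace ℝ (Fin n)))
                = insert v (↑(V.erase v)) := by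
              rw [← Finset.coe_insert, Finset.insert_erase hvV']
            rw [hVins, convexHull_insert hVne] at hq
            obtain ⟨v', hv', z, hz, hseg⟩ := mem_convexJoin.mp hq
            rw [Set.mem_singleton_iff] at hv'
            rw [hv'] at hseg
            obtain ⟨α, β, hα, hβ, hαβ, hqe⟩ := hseg
            refine ⟨α • q' + β • z, (convex_convexHull ℝ _) hq' hz hα hβ hαβ,
              α • w'' + w, add_mem_coneHull (smul_mem_coneHull hw'' hα) hw, ?_⟩
            rw [← hqe, ← hveq]
            rw [smul_add]
            abel
        · exact Set.add_subset_add
            (convexHull_mono (Finset.coe_subset.mpr (Finset.erase_subset v V))) subset_rfl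
      rw [hPeq] at hpt ⊢
      exact IH (V.erase v) (by
        have := Finset.card_erase_of_mem hvV'
        omega) hpt

lemma minkowski {P : Set (EuclideanSpace ℝ (Fin n))} (hP : IsPolyhedron P)
    (hpt : ∀ d ∈ recc P, -d ∈ recc P → d = 0) :
    P ⊆ convexHull ℝ (Set.extremePoints ℝ P) + recc P := by
  obtain ⟨V, D, hVfin, hDfin, rfl⟩ := hP
  have hV : ((hVfin.toFinset : Finset (EuclideanSpace ℝ (Fin n))) :
      Set (EuclideanSpace ℝ (Fin n))) = V := hVfin.coe_toFinset
  rw [← hV] at hpt ⊢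
  refine (mink_aux D hVfin.toFinset.card hVfin.toFinset le_rfl hpt).trans ?_
  exact Set.add_subset_add subset_rfl (coneHull_subset_recc _ _)

lemma horizon {C : Set (EuclideanSpace ℝ (Fin n))} (hcl : IsClosed C) (hcv : Convex ℝ C)
    {c : ℕ → EuclideanSpace ℝ (Fin n)} (hc : ∀ k, c k ∈ C) {t : ℕ → ℝ}
    (ht : Tendsto t atTop atTop) {d : EuclideanSpace ℝ (Fin n)}
    (hd : Tendsto (fun k => (t k)⁻¹ • c k) atTop (nhds d)) : d ∈ recc C := by
  intro x hx s hs
  rcases eq_or_lt_of_le hs with hs0 | hspos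
  · rw [← hs0]; simpa using hx
  have hmem : ∀ᶠ k in atTop, (1 - s / t k) • x + (s / t k) • c k ∈ C := by
    filter_upwards [ht.eventually_ge_atTop (max s 1)] with k hk1
    have htk : 0 < t k := lt_of_lt_of_le zero_lt_one (le_trans (le_max_right s 1) hk1)
    have h1 : 0 ≤ s / t k := div_nonneg hspos.le htk.le
    have h2 : s / t k ≤ 1 := (div_le_one htk).mpr (le_trans (le_max_left s 1) hk1)
    exact hcv hx (hc k) (by linarith) h1 (by ring)
  have hlim : Tendsto (fun k => (1 - s / t k) • x + (s / t k) • c k) atTop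
      (nhds (x + s • d)) := by
    have h2 : Tendsto (fun k => s / t k) atTop (nhds 0) := by
      simp only [div_eq_mul_inv]
      simpa using (ht.inv_tendsto_atTop).const_mul s
    have h1 : Tendsto (fun k => (s / t k) • c k) atTop (nhds (s • d)) := by
      have heq : (fun k => (s / t k) • c k) = fun k => s • ((t k)⁻¹ • c k) := by
        funext k; rw [smul_smul, div_eq_mul_inv]
      rw [heq]
      exact hd.const_smul s
    have h3 : Tendsto (fun k => (1 - s / t k) • x) atTop (nhds x) := by
      have := ((tendsto_const_nhds (x := (1:ℝ))).sub h2).smul_const x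
      simpa using this
    simpa using h3.add h1
  exact hcl.mem_of_tendsto hlim hmem

lemma key_outer {C : Set (EuclideanSpace ℝ (Fin n))}
    (hne : C.Nonempty) (hcl : IsClosed C) (hcv : Convex ℝ C)
    (hpointed : ∀ d ∈ recc C, -d ∈ recc C → d = 0)
    (P : ℕ → Set (EuclideanSpace ℝ (Fin n))) (ε δ : ℕ → ℝ)
    (happrox : ∀ ν, IsEDApprox (P ν) C (ε ν) (δ ν))
    (hε : Tendsto ε atTop (nhds 0)) (hδ : Tendsto δ atTop (nhds 0))
    {x : EuclideanSpace ℝ (Fin n)}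
    (hx : ∀ U ∈ nhds x, ∃ᶠ ν in atTop, (U ∩ P ν).Nonempty) : x ∈ C := by
  by_contra hxC
  have hrpos : 0 < infDist x C := (hcl.notMem_iff_infDist_pos hne).mp hxC
  set r := infDist x C with hrdef
  have hik : ∀ k : ℕ, (0:ℝ) < 1/((k:ℝ)+1) := fun k => by positivity
  have hchoice : ∀ k : ℕ, ∃ ν p, p ∈ P ν ∧ dist p x < 1/((k:ℝ)+1) ∧ ε ν < 1/((k:ℝ)+1)
      ∧ δ ν < 1/((k:ℝ)+1) := by
    intro k
    have hev : ∀ᶠ ν' in atTop, ε ν' < 1/((k:ℝ)+1) ∧ δ ν' < 1/((k:ℝ)+1) :=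
      (hε.eventually (gt_mem_nhds (hik k))).and (hδ.eventually (gt_mem_nhds (hik k)))
    obtain ⟨ν', ⟨p, hpU, hpP⟩, hεν, hδν⟩ :=
      ((hx (ball x (1/((k:ℝ)+1))) (ball_mem_nhds x (hik k))).and_eventually hev).exists
    exact ⟨ν', p, hpP, mem_ball.mp hpU, hεν, hδν⟩
  choose ν p hpP hpx hεν hδν using hchoice
  have hdec : ∀ k, ∃ q ∈ convexHull ℝ (Set.extremePoints ℝ (P (ν k))),
      ∃ w ∈ recc (P (ν k)), q + w = p k :=
    fun k => Set.mem_add.mp (minkowski (happrox (ν k)).1 (happrox (ν k)).2.1 (hpP k))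
  choose q hq w hw hqw using hdec
  have hqthick : ∀ k, q k ∈ cthickening (ε (ν k)) C := by
    intro k
    have hsub : Set.extremePoints ℝ (P (ν k)) ⊆ cthickening (ε (ν k)) C := by
      intro y hy
      rw [mem_cthickening_iff]
      calc EMetric.infEdist y C
          ≤ exc (Set.extremePoints ℝ (P (ν k))) C :=
            le_iSup₂ (f := fun z (_ : z ∈ Set.extremePoints ℝ (P (ν k))) =>
              EMetric.infEdist z C) y hy
        _ ≤ ENNReal.ofReal (ε (ν k)) := (happrox (ν k)).2.2.1
    exact convexHull_min hsub (hcv.cthickening _) (hq k)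
  have hcc : ∀ k, ∃ c ∈ C, dist (q k) c < 1/((k:ℝ)+1) := by
    intro k
    apply (infDist_lt_iff hne).mp
    have h1 : EMetric.infEdist (q k) C ≤ ENNReal.ofReal (ε (ν k)) :=
      mem_cthickening_iff.mp (hqthick k)
    have h2 : infDist (q k) C ≤ max (ε (ν k)) 0 := by
      have h3 := ENNReal.toReal_mono (by simp) h1
      rwa [ENNReal.toReal_ofReal'] at h3
    exact lt_of_le_of_lt h2 (max_lt (hεν k) (hik k))
  choose c hc hqc using hcc
  have hzz : ∀ k, ∃ z ∈ recc C, ‖z‖ ≤ 1 ∧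
      dist (w k) (‖w k‖ • z) ≤ ‖w k‖ * (δ (ν k) + 1/((k:ℝ)+1)) := by
    intro k
    by_cases hw0 : w k = 0
    · exact ⟨0, zero_mem_recc C, by simp, by simp [hw0]⟩
    · have htk : 0 < ‖w k‖ := norm_pos_iff.mpr hw0
      have huP : ‖w k‖⁻¹ • w k ∈ recc (P (ν k)) := smul_mem_recc (hw k) (inv_nonneg.mpr htk.le)
      have hunorm : ‖‖w k‖⁻¹ • w k‖ = 1 := by
        rw [norm_smul, norm_inv, norm_norm, inv_mul_cancel₀ (ne_of_gt htk)]
      have hBne : (recc C ∩ closedBall (0:EuclideanSpace ℝ (Fin n)) 1).Nonempty :=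
        ⟨0, zero_mem_recc _, mem_closedBall_self zero_le_one⟩
      have hAne : (recc (P (ν k)) ∩ closedBall (0:EuclideanSpace ℝ (Fin n)) 1).Nonempty :=
        ⟨0, zero_mem_recc _, mem_closedBall_self zero_le_one⟩
      have hbddA : Bornology.IsBounded (recc (P (ν k)) ∩ closedBall (0:EuclideanSpace ℝ (Fin n)) 1) :=
        (isBounded_closedBall).subset Set.inter_subset_right
      have hbddB : Bornology.IsBounded (recc C ∩ closedBall (0:EuclideanSpace ℝ (Fin n)) 1) :=
        (isBounded_closedBall).subset Set.inter_subset_right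
      have hfin := hausdorffEdist_ne_top_of_nonempty_of_bounded hAne hBne hbddA hbddB
      have h1 : infDist (‖w k‖⁻¹ • w k) (recc C ∩ closedBall 0 1) ≤ δ (ν k) :=
        le_trans (infDist_le_hausdorffDist_of_mem
          (Set.mem_inter huP (by rw [mem_closedBall_zero_iff, hunorm])) hfin)
          (happrox (ν k)).2.2.2.1
      obtain ⟨z, hzB, hdz⟩ := (infDist_lt_iff hBne).mp
        (lt_of_le_of_lt h1 (lt_add_of_pos_right _ (hik k)))
      refine ⟨z, hzB.1, by rw [← mem_closedBall_zero_iff]; exact hzB.2, ?_⟩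
      have heq : dist (w k) (‖w k‖ • z) = ‖w k‖ * dist (‖w k‖⁻¹ • w k) z := by
        calc dist (w k) (‖w k‖ • z)
            = dist (‖w k‖ • (‖w k‖⁻¹ • w k)) (‖w k‖ • z) := by
              rw [smul_inv_smul₀ (ne_of_gt htk)]
          _ = ‖(‖w k‖)‖ * dist (‖w k‖⁻¹ • w k) z := dist_smul₀ _ _ _
          _ = ‖w k‖ * dist (‖w k‖⁻¹ • w k) z := by rw [norm_norm]
      rw [heq]
      exact mul_le_mul_of_nonneg_left hdz.le htk.le
  choose z hzC hznorm hwz using hzz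
  have hkey : ∀ k : ℕ, r ≤ 1/((k:ℝ)+1) + (1/((k:ℝ)+1) + ‖w k‖ * (δ (ν k) + 1/((k:ℝ)+1))) := by
    intro k
    have hCmem : c k + ‖w k‖ • z k ∈ C := hzC k (c k) (hc k) ‖w k‖ (norm_nonneg _)
    calc r ≤ dist x (c k + ‖w k‖ • z k) := infDist_le_dist_of_mem hCmem
      _ ≤ dist x (p k) + dist (p k) (c k + ‖w k‖ • z k) := dist_triangle _ _ _
      _ ≤ 1/((k:ℝ)+1) + (1/((k:ℝ)+1) + ‖w k‖ * (δ (ν k) + 1/((k:ℝ)+1))) := by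
          apply add_le_add (le_of_lt (by rw [dist_comm]; exact hpx k))
          rw [← hqw k]
          exact le_trans (dist_add_add_le _ _ _ _) (add_le_add (hqc k).le (hwz k))
  have hWtop : Tendsto (fun k => ‖w k‖) atTop atTop := by
    apply tendsto_atTop_mono' atTop (f₁ := fun k : ℕ => (r - 2/((k:ℝ)+1)) * (((k:ℝ)+1)/2))
    · filter_upwards with k
      have hK : (0:ℝ) < (k:ℝ)+1 := by positivity
      have h1 := hkey k
      have h2 := hδν k
      have h3 := norm_nonneg (w k)
      have h4 : ‖w k‖ * (δ (ν k) + 1/((k:ℝ)+1)) ≤ ‖w k‖ * (2/((k:ℝ)+1)) := by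
        apply mul_le_mul_of_nonneg_left _ h3
        have he : (2:ℝ)/((k:ℝ)+1) = 1/((k:ℝ)+1) + 1/((k:ℝ)+1) := by ring
        linarith
      have he : (2:ℝ)/((k:ℝ)+1) = 1/((k:ℝ)+1) + 1/((k:ℝ)+1) := by ring
      have h6 : r - 2/((k:ℝ)+1) ≤ ‖w k‖ * (2/((k:ℝ)+1)) := by linarith
      calc (r - 2/((k:ℝ)+1)) * (((k:ℝ)+1)/2)
          ≤ (‖w k‖ * (2/((k:ℝ)+1))) * (((k:ℝ)+1)/2) :=
            mul_le_mul_of_nonneg_right h6 (by positivity)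
        _ = ‖w k‖ := by field_simp
    · apply Filter.Tendsto.pos_mul_atTop hrpos
      · have h0 : Tendsto (fun k:ℕ => 2/((k:ℝ)+1)) atTop (nhds 0) := by
          have := tendsto_one_div_add_atTop_nhds_zero_nat.const_mul (2:ℝ)
          simpa [div_eq_mul_inv, one_div, mul_comm] using this
        simpa using (tendsto_const_nhds (x := r)).sub h0
      · have h1 : Tendsto (fun k:ℕ => (k:ℝ)+1) atTop atTop :=
          tendsto_atTop_add_const_right atTop 1 tendsto_natCast_atTop_atTop
        exact h1.atTop_div_const zero_lt_two
  have hWev : ∀ᶠ k in atTop, 1 ≤ ‖w k‖ := hWtop.eventually_ge_atTop 1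
  have humem : ∀ k, ‖w k‖⁻¹ • w k ∈ closedBall (0 : EuclideanSpace ℝ (Fin n)) 1 := by
    intro k
    rw [mem_closedBall_zero_iff, norm_smul, norm_inv, norm_norm]
    rcases eq_or_ne ‖w k‖ 0 with h | h
    · simp [h]
    · rw [inv_mul_cancel₀ h]
  obtain ⟨uLim, huLimball, φ, hφ, hφtend⟩ :=
    (isCompact_closedBall (0:EuclideanSpace ℝ (Fin n)) 1).tendsto_subseq humem
  have hφtop : Tendsto φ atTop atTop := hφ.tendsto_atTop
  have hφtend' : Tendsto (fun j => ‖w (φ j)‖⁻¹ • w (φ j)) atTop (nhds uLim) := hφtend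
  have hduz : ∀ᶠ k in atTop, dist (‖w k‖⁻¹ • w k) (z k) ≤ δ (ν k) + 1/((k:ℝ)+1) := by
    filter_upwards [hWev] with k hk
    have htk : 0 < ‖w k‖ := lt_of_lt_of_le zero_lt_one hk
    have heq : dist (‖w k‖⁻¹ • w k) (z k) = ‖w k‖⁻¹ * dist (w k) (‖w k‖ • z k) := by
      calc dist (‖w k‖⁻¹ • w k) (z k)
          = dist (‖w k‖⁻¹ • w k) (‖w k‖⁻¹ • (‖w k‖ • z k)) := by
            rw [inv_smul_smul₀ (ne_of_gt htk)]
        _ = ‖(‖w k‖⁻¹)‖ * dist (w k) (‖w k‖ • z k) := dist_smul₀ _ _ _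
        _ = ‖w k‖⁻¹ * dist (w k) (‖w k‖ • z k) := by rw [norm_inv, norm_norm]
    rw [heq]
    calc ‖w k‖⁻¹ * dist (w k) (‖w k‖ • z k)
        ≤ ‖w k‖⁻¹ * (‖w k‖ * (δ (ν k) + 1/((k:ℝ)+1))) :=
          mul_le_mul_of_nonneg_left (hwz k) (inv_nonneg.mpr htk.le)
      _ = δ (ν k) + 1/((k:ℝ)+1) := by field_simp
  have hδν0 : Tendsto (fun k => δ (ν k) + 1/((k:ℝ)+1)) atTop (nhds 0) := by
    have h1 : Tendsto (fun k:ℕ => 1/((k:ℝ)+1)) atTop (nhds 0) :=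
      tendsto_one_div_add_atTop_nhds_zero_nat
    have h2 : Tendsto (fun k => δ (ν k)) atTop (nhds 0) := by
      apply squeeze_zero
        (fun k => le_trans hausdorffDist_nonneg (happrox (ν k)).2.2.2.1)
        (fun k => (hδν k).le) h1
    simpa using h2.add h1
  have hztend : Tendsto (fun j => z (φ j)) atTop (nhds uLim) := by
    apply hφtend'.congr_dist
    apply squeeze_zero' (Eventually.of_forall fun j => dist_nonneg)
      (hφtop.eventually hduz) (hδν0.comp hφtop)
  have huLimC : uLim ∈ recc C := by
    have hclosedB : IsClosed (recc C ∩ closedBall (0:EuclideanSpace ℝ (Fin n)) 1) :=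
      (isClosed_recc hcl).inter isClosed_closedBall
    exact (hclosedB.mem_of_tendsto hztend (Eventually.of_forall fun j =>
      ⟨hzC (φ j), mem_closedBall_zero_iff.mpr (hznorm (φ j))⟩)).1
  have huLimnorm : ‖uLim‖ = 1 := by
    have h1 : Tendsto (fun j => ‖‖w (φ j)‖⁻¹ • w (φ j)‖) atTop (nhds ‖uLim‖) :=
      (continuous_norm.tendsto _).comp hφtend'
    have h2 : ∀ᶠ j in atTop, ‖‖w (φ j)‖⁻¹ • w (φ j)‖ = (1:ℝ) := by
      filter_upwards [hφtop.eventually hWev] with j hj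
      have htk : 0 < ‖w (φ j)‖ := lt_of_lt_of_le zero_lt_one hj
      rw [norm_smul, norm_inv, norm_norm, inv_mul_cancel₀ (ne_of_gt htk)]
    have h3 : Tendsto (fun _ : ℕ => (1:ℝ)) atTop (nhds ‖uLim‖) :=
      h1.congr' (h2.mono fun j hj => hj)
    exact tendsto_nhds_unique h3 tendsto_const_nhds
  have hneg : -uLim ∈ recc C := by
    apply horizon hcl hcv (c := fun j => c (φ j)) (fun j => hc (φ j))
      (t := fun j => ‖w (φ j)‖) (hWtop.comp hφtop)
    have hsum0 : Tendsto (fun j => ‖w (φ j)‖⁻¹ • c (φ j) + ‖w (φ j)‖⁻¹ • w (φ j)) atTop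
        (nhds 0) := by
      apply squeeze_zero_norm' (a := fun j => ‖w (φ j)‖⁻¹ * (2 + ‖x‖))
      · filter_upwards [hφtop.eventually hWev] with j hj
        have htk : 0 < ‖w (φ j)‖ := lt_of_lt_of_le zero_lt_one hj
        have heq : ‖w (φ j)‖⁻¹ • c (φ j) + ‖w (φ j)‖⁻¹ • w (φ j)
            = ‖w (φ j)‖⁻¹ • (c (φ j) + w (φ j)) := by rw [smul_add]
        rw [heq, norm_smul, norm_inv, norm_norm]
        have heq2 : c (φ j) + w (φ j) = (c (φ j) - q (φ j)) + p (φ j) := by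
          rw [← hqw (φ j)]; abel
        have hb1 : ‖c (φ j) - q (φ j)‖ ≤ 1 := by
          have h5 : 1/((φ j:ℝ)+1) ≤ 1 := by
            rw [div_le_one (by positivity)]
            linarith [Nat.cast_nonneg (φ j) (α := ℝ)]
          calc ‖c (φ j) - q (φ j)‖ = dist (q (φ j)) (c (φ j)) := by
                rw [dist_eq_norm, norm_sub_rev]
            _ ≤ 1/((φ j:ℝ)+1) := (hqc (φ j)).le
            _ ≤ 1 := h5
        have hb2 : ‖p (φ j)‖ ≤ 1 + ‖x‖ := by
          calc ‖p (φ j)‖ = ‖(p (φ j) - x) + x‖ := by rw [sub_add_cancel]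
            _ ≤ ‖p (φ j) - x‖ + ‖x‖ := norm_add_le _ _
            _ ≤ 1 + ‖x‖ := by
              apply add_le_add_left
              rw [← dist_eq_norm]
              refine le_trans (hpx (φ j)).le ?_
              rw [div_le_one (by positivity)]
              linarith [Nat.cast_nonneg (φ j) (α := ℝ)]
        have hbound : ‖c (φ j) + w (φ j)‖ ≤ 2 + ‖x‖ := by
          rw [heq2]
          calc ‖(c (φ j) - q (φ j)) + p (φ j)‖ ≤ ‖c (φ j) - q (φ j)‖ + ‖p (φ j)‖ :=
              norm_add_le _ _
            _ ≤ 1 + (1 + ‖x‖) := add_le_add hb1 hb2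
            _ = 2 + ‖x‖ := by ring
        exact mul_le_mul_of_nonneg_left hbound (inv_nonneg.mpr htk.le)
      · have := ((hWtop.comp hφtop).inv_tendsto_atTop).mul_const (2 + ‖x‖)
        simpa [Function.comp] using this
    have h2 := hsum0.sub hφtend'
    simp only [add_sub_cancel_right] at h2
    rw [zero_sub] at h2
    exact h2
  have h0 := hpointed uLim huLimC hneg
  rw [h0, norm_zero] at huLimnorm
  exact one_ne_zero huLimnorm.symm

theorem stmt10 {n : ℕ} (C : Set (EuclideanSpace ℝ (Fin n)))
    (hne : C.Nonempty) (hcl : IsClosed C) (hcv : Convex ℝ C)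
    (hpointed : ∀ d ∈ recc C, -d ∈ recc C → d = 0)
    (P : ℕ → Set (EuclideanSpace ℝ (Fin n))) (ε δ : ℕ → ℝ)
    (happrox : ∀ ν, IsEDApprox (P ν) C (ε ν) (δ ν))
    (hε : Tendsto ε atTop (nhds 0)) (hδ : Tendsto δ atTop (nhds 0)) :
    C = {x | ∀ U ∈ nhds x, ∀ᶠ ν in atTop, (U ∩ P ν).Nonempty} ∧
    C = {x | ∀ U ∈ nhds x, ∃ᶠ ν in atTop, (U ∩ P ν).Nonempty} := by
  have houter : ∀ y : EuclideanSpace ℝ (Fin n),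
      (∀ U ∈ nhds y, ∃ᶠ ν in atTop, (U ∩ P ν).Nonempty) → y ∈ C :=
    fun y hy => key_outer hne hcl hcv hpointed P ε δ happrox hε hδ hy
  have hinner : ∀ y ∈ C, ∀ U ∈ nhds y, ∀ᶠ ν in atTop, (U ∩ P ν).Nonempty := by
    intro y hy U hU
    exact Eventually.of_forall fun ν' => ⟨y, mem_of_mem_nhds hU, (happrox ν').2.2.2.2 hy⟩
  constructor
  · apply Set.Subset.antisymm
    · intro y hy
      exact hinner y hy
    · intro y hy
      exact houter y fun U hU => (hy U hU).frequently
  · apply Set.Subset.antisymm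
    · intro y hy U hU
      exact (hinner y hy U hU).frequently
    · intro y hy
      exact houter y hy
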